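/- Let Θ* be a real symmetric positive definite p×p matrix with Σ* = (Θ*)⁻¹, let T = {(i,j) : Θ*_{ij} ≠ 0} with cardinality m, and let c > 0. Let S̃ be a real symmetric p×p matrix, λ > 0, and α ∈ (0, 1) such that max_{i,j} |S̃_{ij} − Σ*_{ij}| ≤ α·λ. Let r > (1 + α)·λ·√m / c and suppose that for every symmetric Δ with ‖Δ‖_F = r and Θ* + Δ positive definite, the curvature bound ∫₀¹ (1 − v)·tr(((Θ* + vΔ)⁻¹Δ)²) dv ≥ c·‖Δ‖_F² holds. If Θ̂ is a minimizer of Θ ↦ −log det Θ + tr(S̃Θ) + λ‖Θ‖₁ over symmetric positive definite matrices, then ‖Θ̂ − Θ*‖_F < r. -/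

import Mathlib

open scoped Matrix

/-- The Frobenius norm of a real matrix: the square root of the sum of the
squares of the entries. -/
noncomputable def frobNorm {p q : ℕ} (A : Matrix (Fin p) (Fin q) ℝ) : ℝ :=
  Real.sqrt (∑ i, ∑ j, (A i j) ^ 2)

namespace Stmt17Aux

open Matrix Polynomial


attribute [local instance] Matrix.linftyOpNormedRing Matrix.linftyOpNormedAlgebra

variable {p : ℕ}

noncomputable def trB (B : Matrix (Fin p) (Fin p) ℝ) : Matrix (Fin p) (Fin p) ℝ →L[ℝ] ℝ :=
  LinearMap.toContinuousLinearMap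
    ((Matrix.traceLinearMap (Fin p) ℝ ℝ).comp (LinearMap.mulRight ℝ B))

@[simp] lemma trB_apply (B N : Matrix (Fin p) (Fin p) ℝ) : trB B N = (N * B).trace := rfl

/-- Jacobi's formula along an affine line. -/
lemma hasDerivAt_det (A B : Matrix (Fin p) (Fin p) ℝ) (t : ℝ)
    (h : IsUnit ((A + t • B).det)) :
    HasDerivAt (fun s : ℝ => (A + s • B).det)
      ((A + t • B).det * ((A + t • B)⁻¹ * B).trace) t := by
  set M := A + t • B with hM
  set C := M⁻¹ * B with hC
  set q := (Matrix.det (1 + (Polynomial.X : ℝ[X]) • C.map Polynomial.C)).divX.divX with hq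
  have hfun : ∀ s : ℝ, (A + s • B).det
      = M.det * (1 + C.trace * (s - t) + q.eval (s - t) * (s - t) ^ 2) := by
    intro s
    have hMB : M * (1 + (s - t) • C) = A + s • B := by
      rw [mul_add, mul_one, mul_smul_comm, hC, ← mul_assoc, Matrix.mul_nonsing_inv _ h,
        one_mul, hM]
      module
    rw [← hMB, Matrix.det_mul, Matrix.det_one_add_smul]
  have h1 : HasDerivAt (fun s : ℝ => s - t) 1 t := (hasDerivAt_id t).sub_const t
  have h2 : HasDerivAt (fun s : ℝ => q.eval (s - t)) (q.derivative.eval (t - t) * 1) t :=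
    HasDerivAt.comp (h₂ := fun y : ℝ => q.eval y) (h := fun s : ℝ => s - t) (x := t)
      (q.hasDerivAt (t - t)) h1
  have h3 : HasDerivAt (fun s : ℝ => (s - t) ^ 2) (2 * (t - t) ^ 1 * 1) t := by
    simpa using h1.fun_pow 2
  have h4 : HasDerivAt (fun s : ℝ => 1 + C.trace * (s - t) + q.eval (s - t) * (s - t) ^ 2)
      (0 + C.trace * 1 + (q.derivative.eval (t - t) * 1 * (t - t) ^ 2
        + q.eval (t - t) * (2 * (t - t) ^ 1 * 1))) t :=
    ((hasDerivAt_const t (1:ℝ)).add (h1.const_mul C.trace)).add (h2.mul h3)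
  have h5 := h4.const_mul M.det
  have : (fun s : ℝ => (A + s • B).det)
      = fun s : ℝ => M.det * (1 + C.trace * (s - t) + q.eval (s - t) * (s - t) ^ 2) :=
    funext hfun
  rw [this]
  refine h5.congr_deriv ?_
  simp


lemma hasDerivAt_logdet (A B : Matrix (Fin p) (Fin p) ℝ) (t : ℝ)
    (h : (A + t • B).PosDef) :
    HasDerivAt (fun s : ℝ => Real.log ((A + s • B).det))
      (((A + t • B)⁻¹ * B).trace) t := by
  have hdet : (A + t • B).det ≠ 0 := ne_of_gt h.det_pos
  have h2 := HasDerivAt.comp (h₂ := Real.log) (h := fun s : ℝ => (A + s • B).det) (x := t)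
    (Real.hasDerivAt_log hdet) (hasDerivAt_det A B t (isUnit_iff_ne_zero.mpr hdet))
  refine h2.congr_deriv ?_
  field_simp

lemma hasDerivAt_inv (A B : Matrix (Fin p) (Fin p) ℝ) (t : ℝ)
    (hu : IsUnit (A + t • B)) :
    HasDerivAt (fun s : ℝ => (A + s • B)⁻¹)
      (-((A + t • B)⁻¹ * B * (A + t • B)⁻¹)) t := by
  have hpath : HasDerivAt (fun s : ℝ => A + s • B) B t := by
    exact (((hasDerivAt_id t).smul_const B).const_add A).congr_deriv (one_smul ℝ B)
  have hfd : HasFDerivAt (Ring.inverse : Matrix (Fin p) (Fin p) ℝ → _)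
      (-(ContinuousLinearMap.mulLeftRight ℝ _ ↑hu.unit⁻¹ ↑hu.unit⁻¹)) (A + t • B) := by
    simpa [hu.unit_spec] using hasFDerivAt_ringInverse (𝕜 := ℝ) hu.unit
  have h3 := hfd.comp_hasDerivAt t hpath
  have hinv : (↑hu.unit⁻¹ : Matrix (Fin p) (Fin p) ℝ) = (A + t • B)⁻¹ := by
    rw [Matrix.nonsing_inv_eq_ringInverse]
    exact (Ring.inverse_unit hu.unit).symm.trans (congrArg _ hu.unit_spec)
  have hfun : (fun s : ℝ => (A + s • B)⁻¹)
      = fun s : ℝ => Ring.inverse (A + s • B) := by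
    funext s; rw [Matrix.nonsing_inv_eq_ringInverse]
  rw [hfun]
  refine h3.congr_deriv ?_
  simp [hinv]

lemma hasDerivAt_trinv (A B : Matrix (Fin p) (Fin p) ℝ) (t : ℝ)
    (hu : IsUnit (A + t • B)) :
    HasDerivAt (fun s : ℝ => ((A + s • B)⁻¹ * B).trace)
      (-((((A + t • B)⁻¹ * B) * ((A + t • B)⁻¹ * B)).trace)) t := by
  have h3 := (trB B).hasFDerivAt.comp_hasDerivAt t (hasDerivAt_inv A B t hu)
  refine h3.congr_deriv ?_
  change (-((A + t • B)⁻¹ * B * (A + t • B)⁻¹) * B).trace = _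
  simp [mul_assoc]

lemma continuousAt_integrand (A B : Matrix (Fin p) (Fin p) ℝ) (t : ℝ)
    (hu : IsUnit (A + t • B)) :
    ContinuousAt (fun s : ℝ => ((((A + s • B)⁻¹ * B) * ((A + s • B)⁻¹ * B)).trace)) t := by
  have h1 : ContinuousAt (fun s : ℝ => (A + s • B)⁻¹) t :=
    (hasDerivAt_inv A B t hu).continuousAt
  have h2 : Continuous (fun N : Matrix (Fin p) (Fin p) ℝ => (((N * B) * (N * B)).trace)) := by
    have htr : Continuous (Matrix.trace : Matrix (Fin p) (Fin p) ℝ → ℝ) :=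
      LinearMap.continuous_of_finiteDimensional (Matrix.traceLinearMap (Fin p) ℝ ℝ)
    fun_prop
  exact h2.continuousAt.comp h1


lemma taylor_logdet (A B : Matrix (Fin p) (Fin p) ℝ)
    (hPD : ∀ v ∈ Set.Icc (0:ℝ) 1, (A + v • B).PosDef) :
    (∫ v in (0:ℝ)..1, (1 - v) * ((((A + v • B)⁻¹ * B) * ((A + v • B)⁻¹ * B)).trace))
      = (A⁻¹ * B).trace - Real.log (A + B).det + Real.log A.det := by
  have huIcc : Set.uIcc (0:ℝ) 1 = Set.Icc (0:ℝ) 1 := Set.uIcc_of_le zero_le_one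
  have hu : ∀ v ∈ Set.uIcc (0:ℝ) 1, IsUnit (A + v • B) := by
    rw [huIcc]; exact fun v hv => (hPD v hv).isUnit
  set G : ℝ → ℝ := fun v => ((A + v • B)⁻¹ * B).trace with hG
  set G' : ℝ → ℝ := fun v => -((((A + v • B)⁻¹ * B) * ((A + v • B)⁻¹ * B)).trace) with hG'
  have h1 : ∀ x ∈ Set.uIcc (0:ℝ) 1, HasDerivAt (fun v : ℝ => 1 - v) (-1 : ℝ) x := by
    intro x _; simpa using (hasDerivAt_id x).const_sub 1
  have h2 : ∀ x ∈ Set.uIcc (0:ℝ) 1, HasDerivAt G (G' x) x :=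
    fun x hx => hasDerivAt_trinv A B x (hu x hx)
  have h3 : IntervalIntegrable (fun _ : ℝ => (-1 : ℝ)) MeasureTheory.volume 0 1 :=
    intervalIntegrable_const
  have hGcont : ContinuousOn G (Set.uIcc (0:ℝ) 1) :=
    fun x hx => ((h2 x hx).continuousAt).continuousWithinAt
  have hG'cont : ContinuousOn G' (Set.uIcc (0:ℝ) 1) :=
    fun x hx => (((continuousAt_integrand A B x (hu x hx)).neg).continuousWithinAt)
  have h4 : IntervalIntegrable G' MeasureTheory.volume 0 1 := hG'cont.intervalIntegrable
  have hibp := intervalIntegral.integral_mul_deriv_eq_deriv_mul h1 h2 h3 h4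
  have hftc : (∫ v in (0:ℝ)..1, G v)
      = Real.log (A + (1:ℝ) • B).det - Real.log (A + (0:ℝ) • B).det := by
    refine intervalIntegral.integral_eq_sub_of_hasDerivAt
      (f := fun v : ℝ => Real.log ((A + v • B).det)) ?_ hGcont.intervalIntegrable
    intro x hx
    exact hasDerivAt_logdet A B x (hPD x (huIcc ▸ hx))
  have hneg : (∫ v in (0:ℝ)..1, (1 - v) * ((((A + v • B)⁻¹ * B) * ((A + v • B)⁻¹ * B)).trace))
      = -(∫ v in (0:ℝ)..1, (1 - v) * G' v) := by
    rw [← intervalIntegral.integral_neg]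
    congr 1; funext v; simp [hG']
  rw [hneg, hibp]
  have e1 : ∫ x in (0:ℝ)..1, -1 * G x = -(∫ x in (0:ℝ)..1, G x) := by
    simp [neg_one_mul, intervalIntegral.integral_neg]
  rw [e1, hftc]
  simp [hG]
  ring


open scoped MatrixOrder in
lemma trace_sq_nonneg (M Δ : Matrix (Fin p) (Fin p) ℝ) (hM : M.PosDef) (hΔ : Δᵀ = Δ) :
    0 ≤ ((M⁻¹ * Δ) * (M⁻¹ * Δ)).trace := by
  have hN : (M⁻¹).PosDef := hM.inv
  have hNsd := hN.posSemidef
  set Q := CFC.sqrt (M⁻¹) with hQdef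
  have hQ : Q * Q = M⁻¹ := CFC.sqrt_mul_sqrt_self _ hNsd.nonneg
  have hQH : Qᴴ = Q := (CFC.sqrt_nonneg (M⁻¹)).posSemidef.1
  have hΔH : Δᴴ = Δ := by
    ext i j
    have := congrFun (congrFun hΔ i) j
    simpa [Matrix.conjTranspose_apply] using this
  set S := Q * Δ * Q with hS
  have hSH : Sᴴ = S := by
    simp only [hS, Matrix.conjTranspose_mul, hQH, hΔH, mul_assoc]
  have htr : ((M⁻¹ * Δ) * (M⁻¹ * Δ)).trace = (S * S).trace := by
    rw [← hQ, hS]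
    simp only [mul_assoc]
    rw [Matrix.trace_mul_comm Q (Q * (Δ * (Q * (Q * Δ))))]
    simp only [mul_assoc]
  rw [htr, show (S * S).trace = (Sᴴ * S).trace by rw [hSH],
    show (Sᴴ * S).trace = ∑ i, ∑ j, S j i * S j i by
      simp [Matrix.trace, Matrix.diag, Matrix.mul_apply, Matrix.conjTranspose_apply]]
  exact Finset.sum_nonneg fun i _ => Finset.sum_nonneg fun j _ => mul_self_nonneg _

lemma posdef_segment (A B : Matrix (Fin p) (Fin p) ℝ) (hA : A.PosDef) (hB : B.PosDef)
    (t : ℝ) (ht : t ∈ Set.Icc (0:ℝ) 1) : (A + t • (B - A)).PosDef := by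
  obtain ⟨ht0, ht1⟩ := ht
  refine Matrix.PosDef.of_dotProduct_mulVec_pos ?_ ?_
  · have hAH := hA.1
    have hBH := hB.1
    ext i j
    simp only [Matrix.conjTranspose_apply] at *
    have h1 := congrFun (congrFun hAH i) j
    have h2 := congrFun (congrFun hBH i) j
    simp only [Matrix.conjTranspose_apply, Matrix.add_apply, Matrix.smul_apply,
      Matrix.sub_apply, star_trivial] at h1 h2 ⊢
    rw [h1, h2]
  · intro x hx
    have h1 := hA.dotProduct_mulVec_pos hx
    have h2 := hB.dotProduct_mulVec_pos hx
    simp only [star_trivial] at h1 h2 ⊢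
    have expand : x ⬝ᵥ (A + t • (B - A)) *ᵥ x
        = (1 - t) * (x ⬝ᵥ A *ᵥ x) + t * (x ⬝ᵥ B *ᵥ x) := by
      rw [Matrix.add_mulVec, Matrix.smul_mulVec, Matrix.sub_mulVec]
      rw [dotProduct_add, dotProduct_smul]
      simp [dotProduct_sub, smul_eq_mul]
      ring
    rw [expand]
    rcases eq_or_lt_of_le ht0 with h | h
    · simp [← h] at *; linarith
    · have : 0 < t * (x ⬝ᵥ B *ᵥ x) := mul_pos h h2
      have h3 : 0 ≤ (1 - t) * (x ⬝ᵥ A *ᵥ x) :=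
        mul_nonneg (by linarith) (le_of_lt h1)
      linarith


lemma frobNorm_nonneg (A : Matrix (Fin p) (Fin p) ℝ) : 0 ≤ frobNorm A :=
  Real.sqrt_nonneg _

lemma frobNorm_sq (A : Matrix (Fin p) (Fin p) ℝ) :
    frobNorm A ^ 2 = ∑ i, ∑ j, (A i j) ^ 2 :=
  Real.sq_sqrt (by positivity)

lemma frobNorm_smul (t : ℝ) (A : Matrix (Fin p) (Fin p) ℝ) :
    frobNorm (t • A) = |t| * frobNorm A := by
  unfold frobNorm
  rw [← Real.sqrt_sq_eq_abs, ← Real.sqrt_mul (sq_nonneg t)]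
  congr 1
  simp [Matrix.smul_apply, mul_pow, Finset.mul_sum]


lemma neg_logdet_convex (A Δ : Matrix (Fin p) (Fin p) ℝ) (hΔ : Δᵀ = Δ)
    (hPD : ∀ s ∈ Set.Icc (0:ℝ) 1, (A + s • Δ).PosDef) :
    ConvexOn ℝ (Set.Icc (0:ℝ) 1) (fun s : ℝ => -Real.log ((A + s • Δ).det)) := by
  have hIoo : interior (Set.Icc (0:ℝ) 1) = Set.Ioo (0:ℝ) 1 := interior_Icc
  refine convexOn_of_hasDerivWithinAt2_nonneg (convex_Icc 0 1)
    (f' := fun s => -((A + s • Δ)⁻¹ * Δ).trace)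
    (f'' := fun s => (((A + s • Δ)⁻¹ * Δ) * ((A + s • Δ)⁻¹ * Δ)).trace) ?_ ?_ ?_ ?_
  · intro x hx
    exact ((hasDerivAt_logdet A Δ x (hPD x hx)).neg).continuousAt.continuousWithinAt
  · intro x hx
    rw [hIoo] at hx
    exact ((hasDerivAt_logdet A Δ x (hPD x (Set.Ioo_subset_Icc_self hx))).neg).hasDerivWithinAt
  · intro x hx
    rw [hIoo] at hx
    have h2 := (hasDerivAt_trinv A Δ x ((hPD x (Set.Ioo_subset_Icc_self hx)).isUnit)).fun_neg
    simpa using h2.hasDerivWithinAt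
  · intro x hx
    rw [hIoo] at hx
    exact trace_sq_nonneg _ _ (hPD x (Set.Ioo_subset_Icc_self hx)) hΔ

end Stmt17Aux

set_option maxHeartbeats 1000000 in
/-- Deterministic oracle inequality for the graphical lasso:
if `Θ*` is symmetric positive definite with `Σ* = (Θ*)⁻¹` and support `T` of
cardinality `m`, `max_{ij} |S̃_{ij} − Σ*_{ij}| ≤ αλ` with `α ∈ (0,1)`,
`r > (1 + α)λ√m / c`, the curvature lower bound `∫₀¹(1 − v)tr(((Θ* + vΔ)⁻¹Δ)²)dv
≥ c‖Δ‖_F²` holds on the sphere `‖Δ‖_F = r` (for symmetric `Δ` with `Θ* + Δ`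
positive definite), and `Θ̂` minimizes `Θ ↦ −log det Θ + tr(S̃Θ) + λ‖Θ‖₁` over
symmetric positive definite matrices, then `‖Θ̂ − Θ*‖_F < r`. -/
theorem stmt17 {p : ℕ} (Θstar : Matrix (Fin p) (Fin p) ℝ) (hΘstar : Θstar.PosDef)
    (Sigstar : Matrix (Fin p) (Fin p) ℝ) (hSigstar : Sigstar = Θstar⁻¹)
    (T : Finset (Fin p × Fin p)) (hT : ∀ q : Fin p × Fin p, q ∈ T ↔ Θstar q.1 q.2 ≠ 0)
    (m : ℕ) (hm : m = T.card) (c : ℝ) (hc : 0 < c)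
    (Stilde : Matrix (Fin p) (Fin p) ℝ) (hStilde : Stildeᵀ = Stilde)
    (lam α : ℝ) (hlam : 0 < lam) (hα : α ∈ Set.Ioo (0 : ℝ) 1)
    (hmax : ∀ i j, |Stilde i j - Sigstar i j| ≤ α * lam)
    (r : ℝ) (hr : (1 + α) * lam * Real.sqrt m / c < r)
    (hcurv : ∀ Δ : Matrix (Fin p) (Fin p) ℝ, Δᵀ = Δ → frobNorm Δ = r →
      (Θstar + Δ).PosDef →
      c * frobNorm Δ ^ 2 ≤
        ∫ v in (0 : ℝ)..1,
          (1 - v) * ((((Θstar + v • Δ)⁻¹ * Δ) * ((Θstar + v • Δ)⁻¹ * Δ)).trace))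
    (Θhat : Matrix (Fin p) (Fin p) ℝ) (hΘhatPD : Θhat.PosDef)
    (hΘhatmin : ∀ Θ : Matrix (Fin p) (Fin p) ℝ, Θ.PosDef →
      -Real.log Θhat.det + (Stilde * Θhat).trace + lam * ∑ i, ∑ j, |Θhat i j| ≤
        -Real.log Θ.det + (Stilde * Θ).trace + lam * ∑ i, ∑ j, |Θ i j|) :
    frobNorm (Θhat - Θstar) < r := by
  classical
  by_contra hcon
  push_neg at hcon
  -- basic positivity
  have h1α : (0:ℝ) < 1 + α := by linarith [hα.1]
  have hr0 : 0 < r := by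
    refine lt_of_le_of_lt ?_ hr
    have := mul_nonneg (mul_nonneg h1α.le hlam.le) (Real.sqrt_nonneg (m:ℝ))
    exact div_nonneg this hc.le
  set Δh : Matrix (Fin p) (Fin p) ℝ := Θhat - Θstar with hΔh
  have hsymΘs : Θstarᵀ = Θstar := by
    ext i j; simpa using congrFun (congrFun hΘstar.1 i) j
  have hsymΘh : Θhatᵀ = Θhat := by
    ext i j; simpa using congrFun (congrFun hΘhatPD.1 i) j
  have hΔhsym : Δhᵀ = Δh := by rw [hΔh, Matrix.transpose_sub, hsymΘh, hsymΘs]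
  have hfr0 : 0 < frobNorm Δh := lt_of_lt_of_le hr0 hcon
  set t : ℝ := r / frobNorm Δh with htdef
  have ht0 : 0 < t := div_pos hr0 hfr0
  have ht1 : t ≤ 1 := (div_le_one hfr0).mpr hcon
  have hΔsym : (t • Δh)ᵀ = t • Δh := by rw [Matrix.transpose_smul, hΔhsym]
  have hfrobΔ : frobNorm (t • Δh) = r := by
    rw [Stmt17Aux.frobNorm_smul, abs_of_pos ht0, htdef,
      div_mul_cancel₀ _ (ne_of_gt hfr0)]
  -- positive definiteness along the segment
  have hseg : ∀ s ∈ Set.Icc (0:ℝ) 1, (Θstar + s • Δh).PosDef := by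
    intro s hs
    simpa [hΔh] using Stmt17Aux.posdef_segment Θstar Θhat hΘstar hΘhatPD s hs
  have hPDline : ∀ v ∈ Set.Icc (0:ℝ) 1, (Θstar + v • (t • Δh)).PosDef := by
    intro v hv
    have hvt : v * t ∈ Set.Icc (0:ℝ) 1 :=
      ⟨mul_nonneg hv.1 ht0.le, by nlinarith [hv.2, ht1, ht0.le, hv.1]⟩
    simpa [smul_smul] using hseg (v * t) hvt
  have hPDΔ : (Θstar + t • Δh).PosDef := by
    simpa using hPDline 1 ⟨zero_le_one, le_refl 1⟩
  -- Taylor identity + curvature bound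
  have htay := Stmt17Aux.taylor_logdet Θstar (t • Δh) hPDline
  have hcurv' := hcurv (t • Δh) hΔsym hfrobΔ hPDΔ
  rw [hfrobΔ, htay] at hcurv'
  -- convexity of -log det along the segment
  have hconv := Stmt17Aux.neg_logdet_convex Θstar Δh hΔhsym hseg
  have hcx := hconv.2 (Set.left_mem_Icc.mpr zero_le_one) (Set.right_mem_Icc.mpr zero_le_one)
    (by linarith : (0:ℝ) ≤ 1 - t) ht0.le (by ring : (1 - t) + t = 1)
  have h2' : -Real.log ((Θstar + t • Δh).det)
      ≤ (1 - t) * (-Real.log Θstar.det) + t * (-Real.log Θhat.det) := by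
    simpa [hΔh] using hcx
  -- minimizer inequality
  have hmin := hΘhatmin Θstar hΘstar
  -- convexity of the ℓ1 part
  have hl1conv : (∑ i, ∑ j, |(Θstar + t • Δh) i j|)
      ≤ (1 - t) * (∑ i, ∑ j, |Θstar i j|) + t * (∑ i, ∑ j, |Θhat i j|) := by
    have hentry : ∀ i j, |(Θstar + t • Δh) i j|
        ≤ (1 - t) * |Θstar i j| + t * |Θhat i j| := by
      intro i j
      have he : (Θstar + t • Δh) i j = (1 - t) * Θstar i j + t * Θhat i j := by
        simp [hΔh, Matrix.add_apply, Matrix.smul_apply, Matrix.sub_apply]; ring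
      rw [he]
      calc |(1 - t) * Θstar i j + t * Θhat i j|
          ≤ |(1 - t) * Θstar i j| + |t * Θhat i j| := abs_add_le _ _
        _ = (1 - t) * |Θstar i j| + t * |Θhat i j| := by
            rw [abs_mul, abs_mul, abs_of_nonneg (by linarith : (0:ℝ) ≤ 1 - t),
              abs_of_nonneg ht0.le]
    calc (∑ i, ∑ j, |(Θstar + t • Δh) i j|)
        ≤ ∑ i, ∑ j, ((1 - t) * |Θstar i j| + t * |Θhat i j|) :=
          Finset.sum_le_sum fun i _ => Finset.sum_le_sum fun j _ => hentry i j
      _ = (1 - t) * (∑ i, ∑ j, |Θstar i j|) + t * (∑ i, ∑ j, |Θhat i j|) := by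
          simp [Finset.sum_add_distrib, Finset.mul_sum]
  -- trace linearity
  have htrlin : (Stilde * (Θstar + t • Δh)).trace
      = (1 - t) * (Stilde * Θstar).trace + t * (Stilde * Θhat).trace := by
    simp [hΔh, Matrix.mul_add, Matrix.mul_sub, Matrix.trace_add, Matrix.trace_sub,
      Matrix.mul_smul, Matrix.trace_smul, smul_eq_mul]
    ring
  -- the combined "objective decreases" inequality
  have h5 : -Real.log ((Θstar + t • Δh).det) + (Stilde * (Θstar + t • Δh)).trace
        + lam * ∑ i, ∑ j, |(Θstar + t • Δh) i j|
      ≤ -Real.log Θstar.det + (Stilde * Θstar).trace + lam * ∑ i, ∑ j, |Θstar i j| := by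
    have hl1' := mul_le_mul_of_nonneg_left hl1conv hlam.le
    have hmin' := mul_le_mul_of_nonneg_left hmin ht0.le
    rw [htrlin]
    ring_nf at h2' hl1' hmin' ⊢
    linarith [h2', hl1', hmin']
  have htrsplit : (Stilde * (Θstar + t • Δh)).trace
      = (Stilde * Θstar).trace + (Stilde * (t • Δh)).trace := by
    simp [Matrix.mul_add, Matrix.trace_add]
  have h6 : c * r ^ 2 ≤ (Θstar⁻¹ * (t • Δh)).trace - (Stilde * (t • Δh)).trace
      - lam * (∑ i, ∑ j, |(Θstar + t • Δh) i j|) + lam * (∑ i, ∑ j, |Θstar i j|) := by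
    rw [htrsplit] at h5
    linarith [hcurv', h5]
  -- bound the linear trace term
  have ha : (Θstar⁻¹ * (t • Δh)).trace - (Stilde * (t • Δh)).trace
      ≤ α * lam * (∑ i, ∑ j, |(t • Δh) i j|) := by
    have hform : (Θstar⁻¹ * (t • Δh)).trace - (Stilde * (t • Δh)).trace
        = ∑ i, ∑ j, (Θstar⁻¹ i j - Stilde i j) * (t • Δh) j i := by
      simp [Matrix.trace, Matrix.diag, Matrix.mul_apply, ← Finset.sum_sub_distrib, sub_mul]
    rw [hform]
    have hbound : ∀ i j : Fin p, (Θstar⁻¹ i j - Stilde i j) * (t • Δh) j i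
        ≤ α * lam * |(t • Δh) j i| := by
      intro i j
      have h1 : |Θstar⁻¹ i j - Stilde i j| ≤ α * lam := by
        have h2 := hmax i j
        rw [hSigstar] at h2
        rwa [abs_sub_comm] at h2
      calc (Θstar⁻¹ i j - Stilde i j) * (t • Δh) j i
          ≤ |(Θstar⁻¹ i j - Stilde i j) * (t • Δh) j i| := le_abs_self _
        _ = |Θstar⁻¹ i j - Stilde i j| * |(t • Δh) j i| := abs_mul _ _
        _ ≤ α * lam * |(t • Δh) j i| := mul_le_mul_of_nonneg_right h1 (abs_nonneg _)
    calc (∑ i, ∑ j, (Θstar⁻¹ i j - Stilde i j) * (t • Δh) j i)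
        ≤ ∑ i, ∑ j, α * lam * |(t • Δh) j i| :=
          Finset.sum_le_sum fun i _ => Finset.sum_le_sum fun j _ => hbound i j
      _ = α * lam * ∑ i, ∑ j, |(t • Δh) j i| := by simp [Finset.mul_sum]
      _ = α * lam * ∑ i, ∑ j, |(t • Δh) i j| := by rw [Finset.sum_comm]
  -- support decomposition
  have hsum_all : ∀ X : Matrix (Fin p) (Fin p) ℝ,
      (∑ i, ∑ j, |X i j|) = (∑ q ∈ T, |X q.1 q.2|) + ∑ q ∈ Tᶜ, |X q.1 q.2| := by
    intro X
    rw [Finset.sum_add_sum_compl]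
    rw [← Finset.univ_product_univ, Finset.sum_product]
  set ST : ℝ := ∑ q ∈ T, |(t • Δh) q.1 q.2| with hSTdef
  set STc : ℝ := ∑ q ∈ Tᶜ, |(t • Δh) q.1 q.2| with hSTcdef
  have hd : (∑ i, ∑ j, |(t • Δh) i j|) = ST + STc := hsum_all _
  have hzeroTc : ∀ q ∈ Tᶜ, Θstar q.1 q.2 = 0 := by
    intro q hq
    have := (hT q).not
    rw [Finset.mem_compl] at hq
    simpa using this.mp hq
  have hb : (∑ i, ∑ j, |Θstar i j|) - (∑ i, ∑ j, |(Θstar + t • Δh) i j|) ≤ ST - STc := by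
    rw [hsum_all Θstar, hsum_all (Θstar + t • Δh)]
    have e1 : (∑ q ∈ Tᶜ, |Θstar q.1 q.2|) = 0 :=
      Finset.sum_eq_zero fun q hq => by rw [hzeroTc q hq, abs_zero]
    have e2 : (∑ q ∈ Tᶜ, |(Θstar + t • Δh) q.1 q.2|) = STc := by
      refine Finset.sum_congr rfl fun q hq => ?_
      rw [Matrix.add_apply, hzeroTc q hq, zero_add]
    have e3 : (∑ q ∈ T, |Θstar q.1 q.2|) - (∑ q ∈ T, |(Θstar + t • Δh) q.1 q.2|) ≤ ST := by
      rw [← Finset.sum_sub_distrib]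
      refine Finset.sum_le_sum fun q _ => ?_
      have h4 := abs_sub_abs_le_abs_sub (Θstar q.1 q.2) ((Θstar + t • Δh) q.1 q.2)
      have h5 : Θstar q.1 q.2 - (Θstar + t • Δh) q.1 q.2 = -((t • Δh) q.1 q.2) := by
        simp [Matrix.add_apply]
      rw [h5, abs_neg] at h4
      exact h4
    rw [e1, e2]
    linarith [e3]
  -- Cauchy-Schwarz on the support
  have hST0 : 0 ≤ ST := Finset.sum_nonneg fun q _ => abs_nonneg _
  have hSTc0 : 0 ≤ STc := Finset.sum_nonneg fun q _ => abs_nonneg _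
  have hCS : ST ^ 2 ≤ (m : ℝ) * ∑ q ∈ T, ((t • Δh) q.1 q.2) ^ 2 := by
    have h7 := sq_sum_le_card_mul_sum_sq (s := T) (f := fun q => |(t • Δh) q.1 q.2|)
    simpa [hm, sq_abs, hSTdef, mul_pow] using h7
  have hc2 : (∑ q ∈ T, ((t • Δh) q.1 q.2) ^ 2) ≤ r ^ 2 := by
    have hsub : (∑ q ∈ T, ((t • Δh) q.1 q.2) ^ 2)
        ≤ ∑ q : Fin p × Fin p, ((t • Δh) q.1 q.2) ^ 2 :=
      Finset.sum_le_sum_of_subset_of_nonneg (Finset.subset_univ T)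
        fun _ _ _ => sq_nonneg _
    have heq : (∑ q : Fin p × Fin p, ((t • Δh) q.1 q.2) ^ 2) = frobNorm (t • Δh) ^ 2 := by
      rw [Stmt17Aux.frobNorm_sq, ← Finset.univ_product_univ, Finset.sum_product]
    rw [heq, hfrobΔ] at hsub
    exact hsub
  have hST_le : ST ≤ Real.sqrt m * r := by
    calc ST = Real.sqrt (ST ^ 2) := (Real.sqrt_sq hST0).symm
      _ ≤ Real.sqrt ((m : ℝ) * r ^ 2) := by
          refine Real.sqrt_le_sqrt ?_
          calc ST ^ 2 ≤ (m : ℝ) * ∑ q ∈ T, ((t • Δh) q.1 q.2) ^ 2 := hCS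
            _ ≤ (m : ℝ) * r ^ 2 := mul_le_mul_of_nonneg_left hc2 (Nat.cast_nonneg m)
      _ = Real.sqrt m * r := by
          rw [Real.sqrt_mul (Nat.cast_nonneg m), Real.sqrt_sq hr0.le]
  -- final contradiction
  have hb' : lam * ((∑ i, ∑ j, |Θstar i j|)) - lam * (∑ i, ∑ j, |(Θstar + t • Δh) i j|)
      ≤ lam * (ST - STc) := by
    have h8 := mul_le_mul_of_nonneg_left hb hlam.le
    rw [mul_sub] at h8
    exact h8
  have hkey : c * r ^ 2 ≤ α * lam * (ST + STc) + lam * (ST - STc) := by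
    rw [hd] at ha
    linarith [h6, ha, hb']
  have hr' : (1 + α) * lam * Real.sqrt m < c * r := by
    rw [div_lt_iff₀ hc] at hr
    linarith [hr]
  have hfinal1 : (1 + α) * lam * ST ≤ (1 + α) * lam * (Real.sqrt m * r) :=
    mul_le_mul_of_nonneg_left hST_le (mul_nonneg h1α.le hlam.le)
  have hfinal2 : (α - 1) * lam * STc ≤ 0 :=
    mul_nonpos_of_nonpos_of_nonneg
      (mul_nonpos_of_nonpos_of_nonneg (by linarith [hα.2]) hlam.le) hSTc0
  have hfinal3 : (1 + α) * lam * (Real.sqrt m * r) < c * r * r := by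
    nlinarith [hr', hr0]
  have hsplit : α * lam * (ST + STc) + lam * (ST - STc)
      = (1 + α) * lam * ST + (α - 1) * lam * STc := by ring
  rw [hsplit] at hkey
  nlinarith [hkey, hfinal1, hfinal2, hfinal3]
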